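/- Let exchangeable random vectors $v_0, \ldots, v_{r-1} \in \mathbb{R}^d$ and symmetric random matrices $H_0, \ldots, H_{r-1} \in \mathbb{R}^{d\times d}$ satisfy $H_i = \nabla^2 f_i(y_0)$, $v_i = \nabla f_i(y_0)$, with $\frac{1}{r}\sum_i v_i = \nabla f(y_0)$ and $\frac{1}{r}\sum_i H_i = \nabla^2 f(y_0)$ deterministic. Then $\mathbb{E}\big[\sum_{i=0}^{r-1}\sum_{j=0}^{i-1} H_i v_j\big] = \frac{r^2}{4}\nabla\|\nabla f(y_0)\|^2 - \frac{1}{4}\mathbb{E}\big[\sum_{i=0}^{r-1}\nabla\|v_i\|^2\big]$, where $\nabla\|v_i\|^2 = 2H_i v_i$ and $\nabla\|\nabla f(y_0)\|^2 = 2\nabla^2 f(y_0)\nabla f(y_0)$. -/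

import Mathlib

open MeasureTheory Finset Matrix

lemma stmt_18_sum_mulVec {d : ℕ} (s : Finset ℕ) (A : ℕ → Matrix (Fin d) (Fin d) ℝ)
    (x : Fin d → ℝ) : (∑ i ∈ s, A i) *ᵥ x = ∑ i ∈ s, A i *ᵥ x := by
  ext k
  simp [Matrix.mulVec, dotProduct, Matrix.sum_apply, Finset.sum_mul]
  rw [Finset.sum_comm]

lemma stmt_18_mulVec_sum {d : ℕ} (s : Finset ℕ) (A : Matrix (Fin d) (Fin d) ℝ)
    (x : ℕ → Fin d → ℝ) : A *ᵥ (∑ i ∈ s, x i) = ∑ i ∈ s, A *ᵥ x i := by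
  ext k
  simp [Matrix.mulVec, dotProduct, Finset.sum_apply, Finset.mul_sum]
  rw [Finset.sum_comm]

lemma stmt_18_tri {d : ℕ} (f : ℕ → ℕ → Fin d → ℝ) (n : ℕ) :
    ∑ i ∈ range n, ∑ j ∈ range n, f i j =
      (∑ i ∈ range n, ∑ j ∈ range i, f i j) + (∑ i ∈ range n, f i i)
        + ∑ i ∈ range n, ∑ j ∈ range i, f j i := by
  induction n with
  | zero => simp
  | succ n ih => simp [Finset.sum_range_succ, Finset.sum_add_distrib, ih]; abel

theorem stmt_18 {Ω : Type*} [MeasurableSpace Ω] (P : Measure Ω) [IsProbabilityMeasure P]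
    (d r : ℕ) (hr : 1 ≤ r)
    (H : ℕ → Ω → Matrix (Fin d) (Fin d) ℝ)  -- H i ω = ∇²f_i(y₀)(ω)
    (v : ℕ → Ω → Fin d → ℝ)                 -- v i ω = ∇f_i(y₀)(ω)
    (hsymm : ∀ i ω, (H i ω).IsSymm)
    (Hbar : Matrix (Fin d) (Fin d) ℝ) (vbar : Fin d → ℝ)
    -- the averages ∇²f(y₀) and ∇f(y₀) are deterministic
    (hHbar : ∀ ω, (r : ℝ)⁻¹ • ∑ i ∈ Finset.range r, H i ω = Hbar)
    (hvbar : ∀ ω, (r : ℝ)⁻¹ • ∑ i ∈ Finset.range r, v i ω = vbar)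
    (hint : ∀ i j, MeasureTheory.Integrable (fun ω => (H i ω).mulVec (v j ω)) P)
    -- exchangeability: E[H_i v_j] is the same for all pairs i ≠ j
    (hexch : ∀ i j i' j', i < r → j < r → i' < r → j' < r → i ≠ j → i' ≠ j' →
      ∫ ω, (H i ω).mulVec (v j ω) ∂P = ∫ ω, (H i' ω).mulVec (v j' ω) ∂P) :
    (∫ ω, ∑ i ∈ Finset.range r, ∑ j ∈ Finset.range i, (H i ω).mulVec (v j ω) ∂P)
      = ((r : ℝ) ^ 2 / 4) • ((2 : ℝ) • Hbar.mulVec vbar)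
        - (1 / 4 : ℝ) • ∫ ω, ∑ i ∈ Finset.range r, (2 : ℝ) • (H i ω).mulVec (v i ω) ∂P := by
  have hr0 : (r : ℝ) ≠ 0 := by
    positivity
  -- pointwise sums
  have hsumH : ∀ ω, ∑ i ∈ Finset.range r, H i ω = (r : ℝ) • Hbar := fun ω => by
    rw [← hHbar ω, smul_smul, mul_inv_cancel₀ hr0, one_smul]
  have hsumv : ∀ ω, ∑ i ∈ Finset.range r, v i ω = (r : ℝ) • vbar := fun ω => by
    rw [← hvbar ω, smul_smul, mul_inv_cancel₀ hr0, one_smul]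
  set a : ℕ → ℕ → Fin d → ℝ := fun i j => ∫ ω, (H i ω).mulVec (v j ω) ∂P with ha
  -- integral of the full double sum is deterministic
  have hfull : ∑ i ∈ range r, ∑ j ∈ range r, a i j
      = ((r : ℝ) ^ 2) • Hbar.mulVec vbar := by
    have : ∑ i ∈ range r, ∑ j ∈ range r, a i j
        = ∫ ω, ∑ i ∈ range r, ∑ j ∈ range r, (H i ω).mulVec (v j ω) ∂P := by
      rw [integral_finset_sum _ (fun i _ => integrable_finset_sum _ (fun j _ => hint i j))]
      exact Finset.sum_congr rfl fun i _ => (integral_finset_sum _ fun j _ => hint i j).symm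
    rw [this]
    have hpt : ∀ ω : Ω, ∑ i ∈ range r, ∑ j ∈ range r, (H i ω).mulVec (v j ω)
        = ((r : ℝ) ^ 2) • Hbar.mulVec vbar := by
      intro ω
      have : ∑ i ∈ range r, ∑ j ∈ range r, (H i ω).mulVec (v j ω)
          = (∑ i ∈ range r, H i ω) *ᵥ (∑ j ∈ range r, v j ω) := by
        rw [stmt_18_sum_mulVec]
        exact Finset.sum_congr rfl fun i _ => (stmt_18_mulVec_sum _ _ _).symm
      rw [this, hsumH ω, hsumv ω, smul_mulVec, mulVec_smul, smul_smul, pow_two]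
    simp only [hpt]
    simp
  -- lower triangle equals upper triangle (exchangeability)
  have hAB : (∑ i ∈ range r, ∑ j ∈ range i, a i j)
      = ∑ i ∈ range r, ∑ j ∈ range i, a j i := by
    refine Finset.sum_congr rfl fun i hi => Finset.sum_congr rfl fun j hj => ?_
    have hir := Finset.mem_range.mp hi
    have hji := Finset.mem_range.mp hj
    exact hexch i j j i hir (hji.trans hir) (hji.trans hir) hir
      (Nat.ne_of_gt hji) (Nat.ne_of_lt hji)
  -- goal rewrites
  have hLHS : (∫ ω, ∑ i ∈ Finset.range r, ∑ j ∈ Finset.range i, (H i ω).mulVec (v j ω) ∂P)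
      = ∑ i ∈ range r, ∑ j ∈ range i, a i j := by
    rw [integral_finset_sum _ (fun i _ => integrable_finset_sum _ (fun j _ => hint i j))]
    exact Finset.sum_congr rfl fun i _ => integral_finset_sum _ fun j _ => hint i j
  have hD : (∫ ω, ∑ i ∈ Finset.range r, (2 : ℝ) • (H i ω).mulVec (v i ω) ∂P)
      = (2 : ℝ) • ∑ i ∈ range r, a i i := by
    have hint2 : ∀ i, Integrable (fun ω => (2 : ℝ) • (H i ω *ᵥ v i ω)) P :=
      fun i => by simpa [Pi.smul_def] using (hint i i).smul (2 : ℝ)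
    rw [integral_finset_sum _ (fun i _ => hint2 i), Finset.smul_sum]
    exact Finset.sum_congr rfl fun i _ => integral_smul _ _
  rw [hLHS, hD]
  have key := stmt_18_tri a r
  rw [hfull, ← hAB] at key
  -- now pure algebra
  set A := ∑ i ∈ range r, ∑ j ∈ range i, a i j
  set D := ∑ i ∈ range r, a i i
  funext k
  have hk := congrFun key k
  simp only [Pi.add_apply, Pi.smul_apply, Pi.sub_apply, smul_eq_mul] at hk ⊢
  linarith
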